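/- Let G be a connected simple graph of order n with diam(G) = 2 and β(G) = n − 3, with twin graph G*, and let v be a vertex of G such that Γ_2^*(v^*) ≠ ∅ and Γ_1(v) is homogeneous. If Γ_2(v) is not homogeneous, then R_2(v) = ∅ and R_2^*(v^*) = ∅. -/

import Mathlib

namespace PaperMetricDim

open SimpleGraph

variable {V : Type*}

/-- A set `W` of vertices resolves the graph `G`: any two distinct vertices have
different distance to some vertex of `W`. -/
def Resolves (G : SimpleGraph V) (W : Set V) : Prop :=
  ∀ u v : V, u ≠ v → ∃ w ∈ W, G.dist u w ≠ G.dist v w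

/-- The metric dimension of `G`: the minimum cardinality of a resolving set. -/
noncomputable def metricDim (G : SimpleGraph V) : ℕ :=
  sInf {k : ℕ | ∃ W : Set V, Resolves G W ∧ W.ncard = k}

/-- `G` is connected and has diameter exactly `d`. -/
def diamEq (G : SimpleGraph V) (d : ℕ) : Prop :=
  G.Connected ∧ (∀ u v : V, G.dist u v ≤ d) ∧ ∃ u v : V, G.dist u v = d

/-- A set of vertices is homogeneous if it induces a complete or an empty subgraph. -/
def Homogeneous (G : SimpleGraph V) (S : Set V) : Prop :=
  (∀ a ∈ S, ∀ b ∈ S, a ≠ b → G.Adj a b) ∨ (∀ a ∈ S, ∀ b ∈ S, ¬ G.Adj a b)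

/-- Two distinct vertices are twins: they have the same neighbours apart from
each other. -/
def Twins (G : SimpleGraph V) (u v : V) : Prop :=
  u ≠ v ∧ G.neighborSet u \ {v} = G.neighborSet v \ {u}

/-- The twin equivalence relation: equal or twins. -/
def twinRel (G : SimpleGraph V) (u v : V) : Prop := u = v ∨ Twins G u v

/-- The twin class of a vertex. -/
def twinClass (G : SimpleGraph V) (v : V) : Set V := {u : V | twinRel G v u}

/-- The vertices of the twin graph: twin equivalence classes. -/
def TwinVertex (G : SimpleGraph V) : Type _ := {S : Set V // ∃ v : V, S = twinClass G v}

/-- The twin graph `G*` of `G`: twin classes, two distinct classes being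
adjacent iff (some, equivalently all) representatives are adjacent in `G`. -/
def twinGraph (G : SimpleGraph V) : SimpleGraph (TwinVertex G) where
  Adj A B := A ≠ B ∧ ∃ a ∈ A.1, ∃ b ∈ B.1, G.Adj a b
  symm := by
    constructor
    rintro A B ⟨hne, a, ha, b, hb, hab⟩
    exact ⟨hne.symm, b, hb, a, ha, hab.symm⟩
  loopless := by constructor; rintro A ⟨hne, -⟩; exact hne rfl

/-- The twin class of `v`, as a vertex of the twin graph. -/
def cls (G : SimpleGraph V) (v : V) : TwinVertex G := ⟨twinClass G v, v, rfl⟩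

/-- A twin-graph vertex of type (1): a singleton class. -/
def typeOne (G : SimpleGraph V) (A : TwinVertex G) : Prop := ∃ v : V, A.1 = {v}

/-- A twin-graph vertex of type (K): a class with at least two vertices inducing
a complete subgraph. -/
def typeK (G : SimpleGraph V) (A : TwinVertex G) : Prop :=
  A.1.Nontrivial ∧ ∀ a ∈ A.1, ∀ b ∈ A.1, a ≠ b → G.Adj a b

/-- A twin-graph vertex of type (N): a class with at least two vertices inducing
an empty subgraph. -/
def typeN (G : SimpleGraph V) (A : TwinVertex G) : Prop :=
  A.1.Nontrivial ∧ ∀ a ∈ A.1, ∀ b ∈ A.1, ¬ G.Adj a b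

/-- Type (1K): type (1) or type (K). -/
def type1K (G : SimpleGraph V) (A : TwinVertex G) : Prop := typeOne G A ∨ typeK G A

/-- Type (1N): type (1) or type (N). -/
def type1N (G : SimpleGraph V) (A : TwinVertex G) : Prop := typeOne G A ∨ typeN G A

/-- Type (KN): type (K) or type (N). -/
def typeKN (G : SimpleGraph V) (A : TwinVertex G) : Prop := typeK G A ∨ typeN G A

/-- `Γ_i(v)`: the set of vertices at distance `i` from `v`. -/
def Gamma (G : SimpleGraph V) (i : ℕ) (v : V) : Set V := {u : V | G.dist u v = i}

/-- `Γ_i^*(v^*)`: the set of twin-graph vertices at distance `i` from `v^*`. -/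
def GammaStar (G : SimpleGraph V) (i : ℕ) (v : V) : Set (TwinVertex G) :=
  {A : TwinVertex G | (twinGraph G).dist A (cls G v) = i}

/-- `R_1(v)`: neighbours of `v` having a neighbour at distance 2 from `v`. -/
def R1 (G : SimpleGraph V) (v : V) : Set V :=
  {x ∈ Gamma G 1 v | ∃ y ∈ Gamma G 2 v, G.Adj x y}

/-- `R_2(v) = Γ_1(v) \ R_1(v)`. -/
def R2 (G : SimpleGraph V) (v : V) : Set V := Gamma G 1 v \ R1 G v

/-- `R_1^*(v^*)`: twin-graph neighbours of `v^*` having a neighbour in `Γ_2^*(v^*)`. -/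
def R1Star (G : SimpleGraph V) (v : V) : Set (TwinVertex G) :=
  {A ∈ GammaStar G 1 v | ∃ B ∈ GammaStar G 2 v, (twinGraph G).Adj A B}

/-- `R_2^*(v^*) = Γ_1^*(v^*) \ R_1^*(v^*)`. -/
def R2Star (G : SimpleGraph V) (v : V) : Set (TwinVertex G) :=
  GammaStar G 1 v \ R1Star G v

/-- `M_1(x) = Γ_1(v) ∩ Γ_1(x)` (for `x ∈ Γ_1(v)`). -/
def M1 (G : SimpleGraph V) (v x : V) : Set V := Gamma G 1 v ∩ Gamma G 1 x

/-- `M_2(x) = Γ_1(v) ∩ Γ_2(x)` (for `x ∈ Γ_1(v)`). -/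
def M2 (G : SimpleGraph V) (v x : V) : Set V := Gamma G 1 v ∩ Gamma G 2 x

/-- Structure `G_1`: the twin graph is `K_3` and has at most one vertex of type (1K). -/
def structG1 (G : SimpleGraph V) : Prop :=
  ∃ a b c : TwinVertex G, a ≠ b ∧ a ≠ c ∧ b ≠ c ∧
    (∀ X : TwinVertex G, X = a ∨ X = b ∨ X = c) ∧
    (twinGraph G).Adj a b ∧ (twinGraph G).Adj a c ∧ (twinGraph G).Adj b c ∧
    (∀ X Y : TwinVertex G, type1K G X → type1K G Y → X = Y)

/-- Structure `G_2`: the twin graph is the path `P_3` with (a) centre of type (N)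
and some leaf of type (K), or (b) one leaf of type (K) and the other of type (KN). -/
def structG2 (G : SimpleGraph V) : Prop :=
  ∃ a b c : TwinVertex G, a ≠ b ∧ a ≠ c ∧ b ≠ c ∧
    (∀ X : TwinVertex G, X = a ∨ X = b ∨ X = c) ∧
    (twinGraph G).Adj a b ∧ (twinGraph G).Adj b c ∧ ¬ (twinGraph G).Adj a c ∧
    ((typeN G b ∧ (typeK G a ∨ typeK G c)) ∨
     (typeK G a ∧ typeKN G c) ∨ (typeK G c ∧ typeKN G a))

/-- Structure `G_3`: the twin graph is the paw, the triangle being `u, p, q` with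
the pendant vertex `l` attached to `u`; `p` is of type (N), `q` of type (1K),
`l` of type (1N); and if `q` is of type (K) then neither `l` nor `u` is of type (N). -/
def structG3 (G : SimpleGraph V) : Prop :=
  ∃ u p q l : TwinVertex G,
    u ≠ p ∧ u ≠ q ∧ u ≠ l ∧ p ≠ q ∧ p ≠ l ∧ q ≠ l ∧
    (∀ X : TwinVertex G, X = u ∨ X = p ∨ X = q ∨ X = l) ∧
    (twinGraph G).Adj u p ∧ (twinGraph G).Adj u q ∧ (twinGraph G).Adj p q ∧
    (twinGraph G).Adj u l ∧ ¬ (twinGraph G).Adj p l ∧ ¬ (twinGraph G).Adj q l ∧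
    typeN G p ∧ type1K G q ∧ type1N G l ∧
    (typeK G q → ¬ typeN G l ∧ ¬ typeN G u)

/-- Structure `G_4`: the twin graph is the cycle `C_5` and every vertex is of type (1). -/
def structG4 (G : SimpleGraph V) : Prop :=
  ∃ v0 v1 v2 v3 v4 : TwinVertex G,
    v0 ≠ v1 ∧ v0 ≠ v2 ∧ v0 ≠ v3 ∧ v0 ≠ v4 ∧ v1 ≠ v2 ∧ v1 ≠ v3 ∧ v1 ≠ v4 ∧
    v2 ≠ v3 ∧ v2 ≠ v4 ∧ v3 ≠ v4 ∧
    (∀ X : TwinVertex G, X = v0 ∨ X = v1 ∨ X = v2 ∨ X = v3 ∨ X = v4) ∧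
    (twinGraph G).Adj v0 v1 ∧ (twinGraph G).Adj v1 v2 ∧ (twinGraph G).Adj v2 v3 ∧
    (twinGraph G).Adj v3 v4 ∧ (twinGraph G).Adj v4 v0 ∧
    ¬ (twinGraph G).Adj v0 v2 ∧ ¬ (twinGraph G).Adj v1 v3 ∧ ¬ (twinGraph G).Adj v2 v4 ∧
    ¬ (twinGraph G).Adj v3 v0 ∧ ¬ (twinGraph G).Adj v4 v1 ∧
    (∀ X : TwinVertex G, typeOne G X)

/-- Structure `G_5`: the twin graph is `C_5` with one chord (cycle `v0 v1 v2 v3 v4`,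
chord `v0 v2`); the two adjacent degree-2 vertices `v3, v4` are of type (1), the
other vertices of type (1K). -/
def structG5 (G : SimpleGraph V) : Prop :=
  ∃ v0 v1 v2 v3 v4 : TwinVertex G,
    v0 ≠ v1 ∧ v0 ≠ v2 ∧ v0 ≠ v3 ∧ v0 ≠ v4 ∧ v1 ≠ v2 ∧ v1 ≠ v3 ∧ v1 ≠ v4 ∧
    v2 ≠ v3 ∧ v2 ≠ v4 ∧ v3 ≠ v4 ∧
    (∀ X : TwinVertex G, X = v0 ∨ X = v1 ∨ X = v2 ∨ X = v3 ∨ X = v4) ∧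
    (twinGraph G).Adj v0 v1 ∧ (twinGraph G).Adj v1 v2 ∧ (twinGraph G).Adj v2 v3 ∧
    (twinGraph G).Adj v3 v4 ∧ (twinGraph G).Adj v4 v0 ∧ (twinGraph G).Adj v0 v2 ∧
    ¬ (twinGraph G).Adj v1 v3 ∧ ¬ (twinGraph G).Adj v1 v4 ∧ ¬ (twinGraph G).Adj v2 v4 ∧
    typeOne G v3 ∧ typeOne G v4 ∧ type1K G v0 ∧ type1K G v1 ∧ type1K G v2

/-- Structure `G_6`: the twin graph is `C_5` with two adjacent chords (cycle
`v0 v1 v2 v3 v4`, chords `v0 v2` and `v0 v3`, so `v0` has degree 4); `v0` is of any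
type, the other vertices of type (1K); no two non-adjacent vertices are both of
type (K), and no two adjacent vertices have the different types (K) and (N). -/
def structG6 (G : SimpleGraph V) : Prop :=
  ∃ v0 v1 v2 v3 v4 : TwinVertex G,
    v0 ≠ v1 ∧ v0 ≠ v2 ∧ v0 ≠ v3 ∧ v0 ≠ v4 ∧ v1 ≠ v2 ∧ v1 ≠ v3 ∧ v1 ≠ v4 ∧
    v2 ≠ v3 ∧ v2 ≠ v4 ∧ v3 ≠ v4 ∧
    (∀ X : TwinVertex G, X = v0 ∨ X = v1 ∨ X = v2 ∨ X = v3 ∨ X = v4) ∧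
    (twinGraph G).Adj v0 v1 ∧ (twinGraph G).Adj v1 v2 ∧ (twinGraph G).Adj v2 v3 ∧
    (twinGraph G).Adj v3 v4 ∧ (twinGraph G).Adj v4 v0 ∧ (twinGraph G).Adj v0 v2 ∧
    (twinGraph G).Adj v0 v3 ∧
    ¬ (twinGraph G).Adj v1 v3 ∧ ¬ (twinGraph G).Adj v1 v4 ∧ ¬ (twinGraph G).Adj v2 v4 ∧
    type1K G v1 ∧ type1K G v2 ∧ type1K G v3 ∧ type1K G v4 ∧
    (∀ X Y : TwinVertex G, X ≠ Y → ¬ (twinGraph G).Adj X Y →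
      ¬ (typeK G X ∧ typeK G Y)) ∧
    (∀ X Y : TwinVertex G, (twinGraph G).Adj X Y → ¬ (typeK G X ∧ typeN G Y))

/-- Structure `G_7`: the twin graph is the kite (`K_4` minus an edge, vertices
`a, b` of degree 3 in the kite and `c, d` the non-adjacent pair) with a pendant
vertex `l` attached to the degree-3 vertex `a`; `l` is of type (1), `a` and `b`
are of type (1K), one of `c, d` is of type (K) and the other of type (1). -/
def structG7 (G : SimpleGraph V) : Prop :=
  ∃ a b c d l : TwinVertex G,
    a ≠ b ∧ a ≠ c ∧ a ≠ d ∧ a ≠ l ∧ b ≠ c ∧ b ≠ d ∧ b ≠ l ∧ c ≠ d ∧ c ≠ l ∧ d ≠ l ∧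
    (∀ X : TwinVertex G, X = a ∨ X = b ∨ X = c ∨ X = d ∨ X = l) ∧
    (twinGraph G).Adj a b ∧ (twinGraph G).Adj a c ∧ (twinGraph G).Adj a d ∧
    (twinGraph G).Adj b c ∧ (twinGraph G).Adj b d ∧ (twinGraph G).Adj a l ∧
    ¬ (twinGraph G).Adj c d ∧ ¬ (twinGraph G).Adj b l ∧ ¬ (twinGraph G).Adj c l ∧
    ¬ (twinGraph G).Adj d l ∧
    typeOne G l ∧ type1K G a ∧ type1K G b ∧ typeK G c ∧ typeOne G d

/-- Structure `G_8`: the twin graph is the kite (`K_4` minus an edge, `a, b` of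
degree 3 and `c, d` the non-adjacent degree-2 pair); one degree-2 vertex `c` is of
type (K) and the other `d` of type (1); one degree-3 vertex `a` is of type (N)
and the other `b` of type (1K). -/
def structG8 (G : SimpleGraph V) : Prop :=
  ∃ a b c d : TwinVertex G,
    a ≠ b ∧ a ≠ c ∧ a ≠ d ∧ b ≠ c ∧ b ≠ d ∧ c ≠ d ∧
    (∀ X : TwinVertex G, X = a ∨ X = b ∨ X = c ∨ X = d) ∧
    (twinGraph G).Adj a b ∧ (twinGraph G).Adj a c ∧ (twinGraph G).Adj a d ∧
    (twinGraph G).Adj b c ∧ (twinGraph G).Adj b d ∧ ¬ (twinGraph G).Adj c d ∧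
    typeN G a ∧ type1K G b ∧ typeK G c ∧ typeOne G d

/-- Structure `G_9`: the twin graph is `C_4`, two adjacent vertices of type (K)
and the other two of type (1). -/
def structG9 (G : SimpleGraph V) : Prop :=
  ∃ v0 v1 v2 v3 : TwinVertex G,
    v0 ≠ v1 ∧ v0 ≠ v2 ∧ v0 ≠ v3 ∧ v1 ≠ v2 ∧ v1 ≠ v3 ∧ v2 ≠ v3 ∧
    (∀ X : TwinVertex G, X = v0 ∨ X = v1 ∨ X = v2 ∨ X = v3) ∧
    (twinGraph G).Adj v0 v1 ∧ (twinGraph G).Adj v1 v2 ∧ (twinGraph G).Adj v2 v3 ∧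
    (twinGraph G).Adj v3 v0 ∧ ¬ (twinGraph G).Adj v0 v2 ∧ ¬ (twinGraph G).Adj v1 v3 ∧
    typeK G v0 ∧ typeK G v1 ∧ typeOne G v2 ∧ typeOne G v3

/-- Structure `G_10`: the twin graph is the wheel `C_4 ∨ K_1` (hub `h`, rim
`v0 v1 v2 v3`); two adjacent rim (degree-3) vertices `v0, v1` are of type (K), the
hub is of type (1K), and the other vertices of type (1). -/
def structG10 (G : SimpleGraph V) : Prop :=
  ∃ h v0 v1 v2 v3 : TwinVertex G,
    h ≠ v0 ∧ h ≠ v1 ∧ h ≠ v2 ∧ h ≠ v3 ∧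
    v0 ≠ v1 ∧ v0 ≠ v2 ∧ v0 ≠ v3 ∧ v1 ≠ v2 ∧ v1 ≠ v3 ∧ v2 ≠ v3 ∧
    (∀ X : TwinVertex G, X = h ∨ X = v0 ∨ X = v1 ∨ X = v2 ∨ X = v3) ∧
    (twinGraph G).Adj h v0 ∧ (twinGraph G).Adj h v1 ∧ (twinGraph G).Adj h v2 ∧
    (twinGraph G).Adj h v3 ∧
    (twinGraph G).Adj v0 v1 ∧ (twinGraph G).Adj v1 v2 ∧ (twinGraph G).Adj v2 v3 ∧
    (twinGraph G).Adj v3 v0 ∧ ¬ (twinGraph G).Adj v0 v2 ∧ ¬ (twinGraph G).Adj v1 v3 ∧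
    typeK G v0 ∧ typeK G v1 ∧ type1K G h ∧ typeOne G v2 ∧ typeOne G v3

section Aux

variable {G : SimpleGraph V}

lemma twins_symm {u w : V} (h : Twins G u w) : Twins G w u := ⟨h.1.symm, h.2.symm⟩

lemma twinRel_symm {u w : V} (h : twinRel G u w) : twinRel G w u := by
  rcases h with rfl | h
  · exact Or.inl rfl
  · exact Or.inr (twins_symm h)

lemma twins_adj_of_adj {u w z : V} (h : Twins G u w) (hz : G.Adj u z) (hzw : z ≠ w) :
    G.Adj w z := by
  have hmem : z ∈ G.neighborSet u \ {w} := ⟨hz, by simpa using hzw⟩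
  rw [h.2] at hmem
  exact hmem.1

lemma twins_trans_aux {u w t z : V} (h1 : Twins G u w) (h2 : Twins G w t)
    (hut : u ≠ t) (hz : G.Adj u z) (hzt : z ≠ t) : G.Adj t z := by
  by_cases hzw : z = w
  · have hz' : G.Adj u w := hzw ▸ hz
    have h4 : G.Adj t u := twins_adj_of_adj h2 hz'.symm hut
    have h6 : G.Adj w t := twins_adj_of_adj h1 h4.symm h2.1.symm
    rw [hzw]
    exact h6.symm
  · have h3 : G.Adj w z := twins_adj_of_adj h1 hz hzw
    exact twins_adj_of_adj h2 h3 hzt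

lemma twinRel_trans {u w t : V} (h1 : twinRel G u w) (h2 : twinRel G w t) :
    twinRel G u t := by
  rcases h1 with rfl | h1
  · exact h2
  rcases h2 with rfl | h2
  · exact Or.inr h1
  by_cases hut : u = t
  · exact Or.inl hut
  refine Or.inr ⟨hut, Set.ext fun z => ⟨?_, ?_⟩⟩
  · rintro ⟨hz, hzt⟩
    have hz' : G.Adj u z := hz
    exact ⟨twins_trans_aux h1 h2 hut hz' (by simpa using hzt), by simpa using hz'.ne'⟩
  · rintro ⟨hz, hzu⟩
    have hz' : G.Adj t z := hz
    exact ⟨twins_trans_aux (twins_symm h2) (twins_symm h1) (Ne.symm hut) hz'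
      (by simpa using hzu), by simpa using hz'.ne'⟩

lemma mem_twinClass_self (G : SimpleGraph V) (u : V) : u ∈ twinClass G u := Or.inl rfl

lemma twinClass_eq_of {u a : V} (h : twinRel G u a) : twinClass G u = twinClass G a :=
  Set.ext fun z => ⟨fun hz => twinRel_trans (twinRel_symm h) hz,
    fun hz => twinRel_trans h hz⟩

lemma class_eq_of_mem {A : TwinVertex G} {a : V} (ha : a ∈ A.1) :
    A.1 = twinClass G a := by
  obtain ⟨u, hu⟩ := A.2
  rw [hu] at ha ⊢
  exact twinClass_eq_of ha

lemma adj_of_twinRel {v b a : V} (h : twinRel G v b) (hab : G.Adj a b) (hav : a ≠ v) :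
    G.Adj a v := by
  rcases h with rfl | h
  · exact hab
  · exact (twins_adj_of_adj (twins_symm h) hab.symm hav).symm

lemma dist_eq_two_of {u w : V} (hconn : G.Connected) (hle : G.dist u w ≤ 2)
    (hne : u ≠ w) (hnadj : ¬ G.Adj u w) : G.dist u w = 2 := by
  have h0 : 0 < G.dist u w := hconn.pos_dist_of_ne hne
  have h1 : G.dist u w ≠ 1 := fun h => hnadj (dist_eq_one_iff_adj.mp h)
  omega

end Aux

/-- Key lemma: under the hypotheses, there is no vertex `x ∈ Γ_1(v)` all of whose
neighbours in `Γ_2(v)` are twins of `v`. -/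
lemma keyL {V : Type*} [Fintype V] (G : SimpleGraph V)
    (hdiam : diamEq G 2) (hbeta : metricDim G = Fintype.card V - 3)
    (v x : V) (hx : G.dist x v = 1)
    (hnhom : ¬ Homogeneous G (Gamma G 2 v))
    (hL : ∀ y : V, G.dist y v = 2 → G.Adj x y → y ∈ twinClass G v) : False := by
  classical
  obtain ⟨hconn, hle, -⟩ := hdiam
  rw [Homogeneous] at hnhom
  push_neg at hnhom
  obtain ⟨⟨c, hc, d, hd, hcd, hcdn⟩, b0, hb0, b1, hb1, hab⟩ := hnhom
  have hc' : G.dist c v = 2 := hc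
  have hd' : G.dist d v = 2 := hd
  have hb0' : G.dist b0 v = 2 := hb0
  have hb1' : G.dist b1 v = 2 := hb1
  -- get a triple e, f, g in Γ₂(v) with e~f an edge and f~g a non-edge
  obtain ⟨e, f, g, he, hf, hg, hef, hfg, heg, hefadj, hfgnadj⟩ :
      ∃ e f g : V, G.dist e v = 2 ∧ G.dist f v = 2 ∧ G.dist g v = 2 ∧
        e ≠ f ∧ f ≠ g ∧ e ≠ g ∧ G.Adj e f ∧ ¬ G.Adj f g := by
    by_cases hbc : G.Adj b1 c
    · refine ⟨b1, c, d, hb1', hc', hd', hbc.ne, hcd, ?_, hbc, hcdn⟩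
      intro h; exact hcdn (h ▸ hbc).symm
    · by_cases hb1c : b1 = c
      · subst hb1c
        refine ⟨b0, b1, d, hb0', hb1', hd', hab.ne, hcd, ?_, hab, hcdn⟩
        intro h
        exact hcdn (h ▸ hab).symm
      · refine ⟨b0, b1, c, hb0', hb1', hc', hab.ne, hb1c, ?_, hab, hbc⟩
        intro h
        exact hbc (h ▸ hab).symm
  have hev : e ≠ v := by intro h; rw [h, SimpleGraph.dist_self] at he; omega
  have hxf : ¬ G.Adj x f := by
    intro h
    have htw := hL f hf h
    have hev' : G.Adj e v := adj_of_twinRel htw hefadj hev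
    have : G.dist e v = 1 := dist_eq_one_iff_adj.mpr hev'
    omega
  -- middle vertex m on a geodesic from f to v
  obtain ⟨p, hp⟩ := hconn.exists_walk_length_eq_dist f v
  rw [hf] at hp
  obtain ⟨m, hfm, hmv⟩ : ∃ m : V, G.Adj f m ∧ G.Adj m v := by
    cases p with
    | nil => exact absurd hp (by simp)
    | cons h q =>
      cases q with
      | nil => exact absurd hp (by simp)
      | cons h2 q2 =>
        cases q2 with
        | nil => exact ⟨_, h, h2⟩
        | cons h3 q3 =>
          exfalso
          rw [Walk.length_cons, Walk.length_cons, Walk.length_cons] at hp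
          omega
  have hmv1 : G.dist m v = 1 := dist_eq_one_iff_adj.mpr hmv
  have hmf1 : G.dist m f = 1 := dist_eq_one_iff_adj.mpr hfm.symm
  have hef1 : G.dist e f = 1 := dist_eq_one_iff_adj.mpr hefadj
  have hxfne : x ≠ f := by intro h; rw [h] at hx; omega
  have hxf2 : G.dist x f = 2 := dist_eq_two_of hconn (hle x f) hxfne hxf
  have hgf2 : G.dist g f = 2 :=
    dist_eq_two_of hconn (hle g f) (Ne.symm hfg) (fun h => hfgnadj h.symm)
  -- distinctness
  have hxm : x ≠ m := by intro h; rw [h] at hxf2; omega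
  have hxe : x ≠ e := by intro h; rw [h] at hx; omega
  have hxg : x ≠ g := by intro h; rw [h] at hx; omega
  have hme : m ≠ e := by intro h; rw [h] at hmv1; omega
  have hmg : m ≠ g := by intro h; rw [h] at hmv1; omega
  have hvx : v ≠ x := by intro h; rw [← h, SimpleGraph.dist_self] at hx; omega
  have hvm : v ≠ m := by intro h; rw [← h, SimpleGraph.dist_self] at hmv1; omega
  have hve : v ≠ e := by intro h; rw [← h, SimpleGraph.dist_self] at he; omega
  have hvg : v ≠ g := by intro h; rw [← h, SimpleGraph.dist_self] at hg; omega
  have hfx : f ≠ x := Ne.symm hxfne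
  have hfm' : f ≠ m := by intro h; rw [h] at hf; omega
  have hfe : f ≠ e := Ne.symm hef
  -- the 4-set
  have hvS : v ∉ ({x, m, e, g} : Finset V) := by simp [hvx, hvm, hve, hvg]
  have hfS : f ∉ ({x, m, e, g} : Finset V) := by simp [hfx, hfm', hfe, hfg]
  have hcardS : ({x, m, e, g} : Finset V).card = 4 := by
    rw [Finset.card_insert_of_notMem (by simp [hxm, hxe, hxg]),
        Finset.card_insert_of_notMem (by simp [hme, hmg]),
        Finset.card_insert_of_notMem (by simp [heg])]
    simp
  have hres : Resolves G (↑(({x, m, e, g} : Finset V)ᶜ) : Set V) := by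
    intro u u' hne
    by_cases hu : u ∈ ({x, m, e, g} : Finset V)
    · by_cases hu' : u' ∈ ({x, m, e, g} : Finset V)
      · have hvW : v ∈ (↑(({x, m, e, g} : Finset V)ᶜ) : Set V) :=
          Finset.mem_coe.mpr (Finset.mem_compl.mpr hvS)
        have hfW : f ∈ (↑(({x, m, e, g} : Finset V)ᶜ) : Set V) :=
          Finset.mem_coe.mpr (Finset.mem_compl.mpr hfS)
        simp only [Finset.mem_insert, Finset.mem_singleton] at hu hu'
        rcases hu with rfl | rfl | rfl | rfl <;> rcases hu' with rfl | rfl | rfl | rfl <;>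
          first
          | exact absurd rfl hne
          | exact ⟨v, hvW, by omega⟩
          | exact ⟨f, hfW, by omega⟩
      · refine ⟨u', Finset.mem_coe.mpr (Finset.mem_compl.mpr hu'), ?_⟩
        have h0 : 0 < G.dist u u' := hconn.pos_dist_of_ne hne
        rw [SimpleGraph.dist_self]
        omega
    · refine ⟨u, Finset.mem_coe.mpr (Finset.mem_compl.mpr hu), ?_⟩
      have h0 : 0 < G.dist u' u := hconn.pos_dist_of_ne (Ne.symm hne)
      rw [SimpleGraph.dist_self]
      omega
  have hcard : (↑(({x, m, e, g} : Finset V)ᶜ) : Set V).ncard = Fintype.card V - 4 := by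
    rw [Set.ncard_coe_finset, Finset.card_compl, hcardS]
  have hmem : Fintype.card V - 4 ∈ {k : ℕ | ∃ W : Set V, Resolves G W ∧ W.ncard = k} :=
    ⟨_, hres, hcard⟩
  have hle' : metricDim G ≤ Fintype.card V - 4 := Nat.sInf_le hmem
  have h4 : 4 ≤ Fintype.card V := by rw [← hcardS]; exact Finset.card_le_univ _
  rw [hbeta] at hle'
  omega

/-- If `G` is connected of order `n`, `diam(G) = 2`, `β(G) = n - 3`, `v` is a
vertex with `Γ_2^*(v^*) ≠ ∅` and `Γ_1(v)` homogeneous, and `Γ_2(v)` is not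
homogeneous, then `R_2(v) = ∅` and `R_2^*(v^*) = ∅`. -/
theorem R2_empty_of_gamma_two_not_homogeneous
    {V : Type*} [Fintype V] (G : SimpleGraph V)
    (hdiam : diamEq G 2)
    (hbeta : metricDim G = Fintype.card V - 3)
    (v : V) (h2 : (GammaStar G 2 v).Nonempty)
    (hhom : Homogeneous G (Gamma G 1 v))
    (hnhom : ¬ Homogeneous G (Gamma G 2 v)) :
    R2 G v = ∅ ∧ R2Star G v = ∅ := by
  classical
  constructor
  · rw [Set.eq_empty_iff_forall_notMem]
    intro x hx
    have hx1 : G.dist x v = 1 := hx.1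
    have hx2 : x ∉ R1 G v := hx.2
    exact keyL G hdiam hbeta v x hx1 hnhom
      (fun y hy hxy => absurd
        (show x ∈ Gamma G 1 v ∧ ∃ y ∈ Gamma G 2 v, G.Adj x y from ⟨hx.1, y, hy, hxy⟩)
        hx2)
  · rw [Set.eq_empty_iff_forall_notMem]
    intro A hA
    have hA1 : A ∈ GammaStar G 1 v := hA.1
    have hA2 : A ∉ R1Star G v := hA.2
    have hA1' : (twinGraph G).dist A (cls G v) = 1 := hA1
    have hAv : (twinGraph G).Adj A (cls G v) := dist_eq_one_iff_adj.mp hA1'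
    obtain ⟨hneA, a, ha, b, hb, hab⟩ := id hAv
    have hav : a ∉ twinClass G v := by
      intro h
      apply hneA
      apply Subtype.ext
      exact (class_eq_of_mem ha).trans (twinClass_eq_of h).symm
    have hane : a ≠ v := by
      intro h
      exact hav (by rw [h]; exact mem_twinClass_self G v)
    have hbtw : twinRel G v b := hb
    have haav : G.Adj a v := adj_of_twinRel hbtw hab hane
    have hav1 : G.dist a v = 1 := dist_eq_one_iff_adj.mpr haav
    apply keyL G hdiam hbeta v a hav1 hnhom
    intro y hy hay
    by_contra hyt
    have hyv : y ≠ v := by intro h; rw [h, SimpleGraph.dist_self] at hy; omega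
    have hBv : ¬ (twinGraph G).Adj (cls G y) (cls G v) := by
      rintro ⟨-, y', hy', v'', hv'', hadj'⟩
      have hy'tw : twinRel G y y' := hy'
      have hv''tw : twinRel G v v'' := hv''
      have hv''y : v'' ≠ y := by
        intro h
        exact hyt (by rw [← h]; exact hv'')
      have h1 : G.Adj v'' y := adj_of_twinRel hy'tw hadj'.symm hv''y
      have h2 : G.Adj y v := adj_of_twinRel hv''tw h1.symm hyv
      have := dist_eq_one_iff_adj.mpr h2
      omega
    have hBne : cls G y ≠ cls G v := by
      intro h
      have h' : twinClass G y = twinClass G v := congrArg Subtype.val h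
      exact hyt (h' ▸ mem_twinClass_self G y)
    have hAB : (twinGraph G).Adj A (cls G y) := by
      refine ⟨?_, a, ha, y, mem_twinClass_self G y, hay⟩
      intro h
      have h1 : a ∈ twinClass G y := by rw [h] at ha; exact ha
      have h1' : twinRel G y a := h1
      have h2 : G.Adj v y := adj_of_twinRel h1' haav.symm (Ne.symm hyv)
      have := dist_eq_one_iff_adj.mpr h2.symm
      omega
    have hdB : (twinGraph G).dist (cls G y) (cls G v) = 2 := by
      have hdle : (twinGraph G).dist (cls G y) (cls G v) ≤ 2 := by
        have h := dist_le (Walk.cons hAB.symm (Walk.cons hAv Walk.nil))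
        simpa using h
      have hne0 : (twinGraph G).dist (cls G y) (cls G v) ≠ 0 := by
        intro h
        rcases dist_eq_zero_iff_eq_or_not_reachable.mp h with h' | h'
        · exact hBne h'
        · exact h' ⟨Walk.cons hAB.symm (Walk.cons hAv Walk.nil)⟩
      have hne1 : (twinGraph G).dist (cls G y) (cls G v) ≠ 1 := by
        intro h
        exact hBv (dist_eq_one_iff_adj.mp h)
      omega
    exact hA2 (show A ∈ GammaStar G 1 v ∧
      ∃ B ∈ GammaStar G 2 v, (twinGraph G).Adj A B from ⟨hA1, cls G y, hdB, hAB⟩)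

end PaperMetricDim
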